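/- Let α, β be real numbers with 4α + 6β² − 5β ≠ 0 and 2β ≠ 1. Define c_P = 3(−3β² − 2α + 2β) and c_B = 2(12αβ² + 8α² − 8αβ − 4β² − 3α + 3β)/(2β−1)². Then c_P − c_B = −(4α + 6β² − 5β)²/(2β−1)², and in particular c_P < c_B. -/

import Mathlib

theorem stmt_0 (α β : ℝ) (h1 : 4*α + 6*β^2 - 5*β ≠ 0) (h2 : 2*β ≠ 1)
    (cP cB : ℝ)
    (hcP : cP = 3*(-3*β^2 - 2*α + 2*β))
    (hcB : cB = 2*(12*α*β^2 + 8*α^2 - 8*α*β - 4*β^2 - 3*α + 3*β)/(2*β-1)^2) :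
    cP - cB = -(4*α + 6*β^2 - 5*β)^2/(2*β-1)^2 ∧ cP < cB := by
  have hd : (2*β-1)^2 ≠ 0 := pow_ne_zero _ (sub_ne_zero.mpr h2)
  have heq : cP - cB = -(4*α + 6*β^2 - 5*β)^2/(2*β-1)^2 := by
    rw [hcP, hcB]
    rw [sub_eq_iff_eq_add, ← add_div, eq_div_iff hd]
    ring
  refine ⟨heq, ?_⟩
  have : cP - cB < 0 := by
    rw [heq, neg_div]
    have hp : (0:ℝ) < (4*α + 6*β^2 - 5*β)^2 := by positivity
    exact neg_neg_of_pos (div_pos hp (by positivity))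
  linarith
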